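/- arXiv:2304.06758 — 2 statements merged into one kernel-verified Lean document; each statement's English description precedes it below -/
import Mathlib

section
/- Let m ≥ 1, let M, N ⊆ [m] with M ⊊ [m] and |M|+|N| ≥ 1, and let D = aΔ_M^c + cΔ_N ⊆ E^m. Then the linear left-E-code C^L_D has length |D| = (2^m−2^{|M|})·2^{|N|} and size |C^L_D| = 2^{2m}, and the multiset {wt_Lee(c^L_D(v)) : v ∈ E^m} (with multiplicity over all 2^{2m} elements v ∈ E^m) consists of: 2^{m+|N|} with multiplicity 2^{2m−2|M|}−2^{m−|M|+1}+1; 2^{m+|N|−1} with multiplicity 2^{m−|M|+1}−2; 2^{m+|N|}−2^{|M|+|N|} with multiplicity 2^{2m}+2^{2m−2|M|}−2^{2m−|M|+1}; 2^{m+|N|}−2^{|M|+|N|−1} with multiplicity 2^{2m−|M|+1}−2^{2m−2|M|+1}−2^{m+1}+2^{m−|M|+1}; 2^{m+|N|−1}−2^{|M|+|N|−1} with multiplicity 2^{m+1}−2^{m−|M|+1}; and 0 with multiplicity 1. -/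
open Finset

/-- The simplicial complex `Δ_M ⊆ 𝔽₂^m` generated by `M ⊆ [m]`:
all vectors whose support is contained in `M`. -/
def deltaC {m : ℕ} (M : Finset (Fin m)) : Finset (Fin m → ZMod 2) :=
  Finset.univ.filter (fun w => ∀ i, w i ≠ 0 → i ∈ M)

/-- Dot product over `𝔽₂`. -/
def dotp {m : ℕ} (x y : Fin m → ZMod 2) : ZMod 2 := ∑ i, x i * y i

/-- The Gray map on a single element `a·s + c·t ↔ (s, t)` of `E = 𝔽₂ × 𝔽₂`:
`Φ(as + ct) = (t, s + t)`. -/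
def grayPair (e : ZMod 2 × ZMod 2) : Fin 2 → ZMod 2 := ![e.2, e.1 + e.2]

/-- The left codeword `c^L_D(v)` for `v = aα + cβ ↔ (α, β)`:
its coordinate at `d = (t₁, t₂) ∈ D` is `a(α·t₁) + c(β·t₁) ↔ (α·t₁, β·t₁)`. -/
def cwL {m : ℕ} (Ds : Finset ((Fin m → ZMod 2) × (Fin m → ZMod 2)))
    (v : (Fin m → ZMod 2) × (Fin m → ZMod 2)) :
    {d // d ∈ Ds} → ZMod 2 × ZMod 2 :=
  fun d => (dotp v.1 d.1.1, dotp v.2 d.1.1)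

/-- The Gray image `Φ(c^L_D(v)) ∈ 𝔽₂^{2|D|}` of the left codeword `c^L_D(v)`;
its Hamming weight (`hammingNorm`) is the Lee weight of `c^L_D(v)`. -/
def gcwL {m : ℕ} (Ds : Finset ((Fin m → ZMod 2) × (Fin m → ZMod 2)))
    (v : (Fin m → ZMod 2) × (Fin m → ZMod 2)) :
    {d // d ∈ Ds} × Fin 2 → ZMod 2 :=
  fun x => grayPair (cwL Ds v x.1) x.2

/-- The right codeword `c^R_D(v)` for `v = aα + cβ ↔ (α, β)`:
its coordinate at `d = (t₁, t₂) ∈ D` is `a(t₁·α) + c(t₂·α) ↔ (t₁·α, t₂·α)`. -/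
def cwR {m : ℕ} (Ds : Finset ((Fin m → ZMod 2) × (Fin m → ZMod 2)))
    (v : (Fin m → ZMod 2) × (Fin m → ZMod 2)) :
    {d // d ∈ Ds} → ZMod 2 × ZMod 2 :=
  fun d => (dotp d.1.1 v.1, dotp d.1.2 v.1)

/-- The Gray image `Φ(c^R_D(v)) ∈ 𝔽₂^{2|D|}` of the right codeword `c^R_D(v)`;
its Hamming weight (`hammingNorm`) is the Lee weight of `c^R_D(v)`. -/
def gcwR {m : ℕ} (Ds : Finset ((Fin m → ZMod 2) × (Fin m → ZMod 2)))
    (v : (Fin m → ZMod 2) × (Fin m → ZMod 2)) :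
    {d // d ∈ Ds} × Fin 2 → ZMod 2 :=
  fun x => grayPair (cwR Ds v x.1) x.2


/-! ### Auxiliary lemmas -/

section Aux

variable {m : ℕ}

lemma dotp_add_right (x y z : Fin m → ZMod 2) : dotp x (y + z) = dotp x y + dotp x z := by
  simp [dotp, mul_add, Finset.sum_add_distrib]

lemma dotp_add_left (x y z : Fin m → ZMod 2) : dotp (x + y) z = dotp x z + dotp y z := by
  simp [dotp, add_mul, Finset.sum_add_distrib]

lemma dotp_single (x : Fin m → ZMod 2) (i : Fin m) : dotp x (Pi.single i 1) = x i := by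
  simp [dotp, Pi.single_apply, mul_ite]

lemma zmod2_ne_zero : ∀ x : ZMod 2, x ≠ 0 → x = 1 := by decide

lemma mem_deltaC {M : Finset (Fin m)} {t : Fin m → ZMod 2} :
    t ∈ deltaC M ↔ ∀ i, t i ≠ 0 → i ∈ M := by simp [deltaC]

lemma deltaC_add {M : Finset (Fin m)} {s t : Fin m → ZMod 2}
    (hs : s ∈ deltaC M) (ht : t ∈ deltaC M) : s + t ∈ deltaC M := by
  rw [mem_deltaC] at *
  intro i hi
  by_contra hiM
  have h1 : s i = 0 := by by_contra h; exact hiM (hs i h)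
  have h2 : t i = 0 := by by_contra h; exact hiM (ht i h)
  exact hi (by simp [h1, h2])

lemma card_deltaC (M : Finset (Fin m)) : (deltaC M).card = 2 ^ M.card := by
  have h : (deltaC M).card = Fintype.card ({i // i ∈ M} → ZMod 2) := by
    apply Finset.card_nbij' (fun f j => f j.1)
      (fun g => fun i => if h : i ∈ M then g ⟨i, h⟩ else 0)
    · intro f hf; simp
    · intro g _; simp only [deltaC, Finset.mem_coe, Finset.mem_filter, Finset.mem_univ, true_and]
      intro i hi
      by_contra hiM
      exact hi (dif_neg hiM)
    · intro f hf
      funext i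
      simp only [deltaC, Finset.mem_coe, Finset.mem_filter] at hf
      by_cases hiM : i ∈ M
      · simp [hiM]
      · simp only [dif_neg hiM]
        by_contra h'
        exact hiM (hf.2 i (Ne.symm h'))
    · intro g _; funext j; simp [j.2]
  rw [h]
  simp [Fintype.card_fun]

lemma deltaC_univ : deltaC (univ : Finset (Fin m)) = univ := by simp [deltaC]

lemma count_dot_zero (M : Finset (Fin m)) (γ : Fin m → ZMod 2) (hγ : ∀ i ∈ M, γ i = 0) :
    ((deltaC M).filter (fun t => dotp γ t ≠ 0)).card = 0 := by
  rw [Finset.card_eq_zero, Finset.filter_eq_empty_iff]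
  intro t ht
  rw [mem_deltaC] at ht
  simp only [ne_eq, not_not]
  rw [dotp]
  apply Finset.sum_eq_zero
  intro i _
  by_cases h : t i = 0
  · simp [h]
  · simp [hγ i (ht i h)]

lemma count_dot (M : Finset (Fin m)) (γ : Fin m → ZMod 2) (i₀ : Fin m)
    (hi : i₀ ∈ M) (hγ : γ i₀ ≠ 0) :
    ((deltaC M).filter (fun t => dotp γ t ≠ 0)).card = 2 ^ (M.card - 1) := by
  set e : Fin m → ZMod 2 := Pi.single i₀ 1 with he
  have heM : e ∈ deltaC M := by
    rw [mem_deltaC]; intro i hi'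
    by_contra hiM
    exact hi' (by simp [he, Pi.single_apply]; intro h; exact absurd (h ▸ hi) hiM)
  have hee : e + e = 0 := by
    funext i; simp [CharTwo.add_self_eq_zero]
  have hflip : ∀ t, dotp γ (t + e) = dotp γ t + 1 := by
    intro t; rw [dotp_add_right, he, dotp_single, zmod2_ne_zero _ hγ]
  have hcards : ((deltaC M).filter (fun t => dotp γ t ≠ 0)).card
      = ((deltaC M).filter (fun t => ¬ dotp γ t ≠ 0)).card := by
    apply Finset.card_bij (fun t _ => t + e)
    · intro t ht
      simp only [Finset.mem_filter] at ht ⊢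
      refine ⟨deltaC_add ht.1 heM, ?_⟩
      rw [hflip, zmod2_ne_zero _ ht.2]
      decide
    · intro t ht t' ht' h
      have := congrArg (· + e) h
      simpa [add_assoc, hee] using this
    · intro t ht
      refine ⟨t + e, ?_, by rw [add_assoc, hee, add_zero]⟩
      simp only [Finset.mem_filter] at ht ⊢
      refine ⟨deltaC_add ht.1 heM, ?_⟩
      rw [hflip]
      simp only [ne_eq, not_not] at ht
      rw [ht.2]
      decide
  have hsum := Finset.card_filter_add_card_filter_not
    (s := deltaC M) (p := fun t => dotp γ t ≠ 0)
  have hM1 : 1 ≤ M.card := Finset.card_pos.mpr ⟨i₀, hi⟩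
  have hdc : (deltaC M).card = 2 ^ M.card := card_deltaC M
  rw [hdc] at hsum
  have h2 : 2 ^ M.card = 2 * 2 ^ (M.card - 1) := by
    rw [← pow_succ']
    congr 1
    omega
  omega

/-- Weight contribution of a single Gray coordinate pattern. -/
def wfun {m : ℕ} (M : Finset (Fin m)) (x : Fin m → ZMod 2) : ℕ :=
  (((deltaC M)ᶜ).filter (fun t => dotp x t ≠ 0)).card

lemma wfun_add_cnt (M : Finset (Fin m)) (x : Fin m → ZMod 2) :
    wfun M x + ((deltaC M).filter (fun t => dotp x t ≠ 0)).card
      = ((univ : Finset (Fin m → ZMod 2)).filter (fun t => dotp x t ≠ 0)).card := by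
  rw [wfun, ← Finset.card_union_of_disjoint
    (Finset.disjoint_filter_filter
      (disjoint_compl_left (a := deltaC M) : Disjoint (deltaC M)ᶜ (deltaC M))),
    ← Finset.filter_union]
  congr 1
  rw [Finset.union_comm, Finset.union_compl]

lemma cnt_univ (x : Fin m → ZMod 2) (hx : x ≠ 0) :
    ((univ : Finset (Fin m → ZMod 2)).filter (fun t => dotp x t ≠ 0)).card = 2 ^ (m - 1) := by
  obtain ⟨i₀, hi₀⟩ := Function.ne_iff.mp hx
  have := count_dot (univ : Finset (Fin m)) x i₀ (Finset.mem_univ _) (by simpa using hi₀)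
  rw [deltaC_univ] at this
  simpa using this

lemma wfun_zero (M : Finset (Fin m)) : wfun M 0 = 0 := by
  rw [wfun, Finset.card_eq_zero, Finset.filter_eq_empty_iff]
  intro t _
  simp [dotp]

lemma wfun_A (M : Finset (Fin m)) (x : Fin m → ZMod 2) (hx0 : x ≠ 0)
    (hxM : ∀ i ∈ M, x i = 0) : wfun M x = 2 ^ (m - 1) := by
  have h := wfun_add_cnt M x
  rw [count_dot_zero M x hxM, cnt_univ x hx0] at h
  omega

lemma wfun_B (M : Finset (Fin m)) (x : Fin m → ZMod 2)
    (hxM : ¬ ∀ i ∈ M, x i = 0) : wfun M x + 2 ^ (M.card - 1) = 2 ^ (m - 1) := by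
  push_neg at hxM
  obtain ⟨i₀, hi₀, hx⟩ := hxM
  have h := wfun_add_cnt M x
  rw [count_dot M x i₀ hi₀ hx, cnt_univ x (fun h0 => hx (by rw [h0]; rfl))] at h
  exact h

lemma weight_eq (M N : Finset (Fin m)) (Ds : Finset ((Fin m → ZMod 2) × (Fin m → ZMod 2)))
    (hDs : Ds = (deltaC M)ᶜ ×ˢ deltaC N)
    (v : (Fin m → ZMod 2) × (Fin m → ZMod 2)) :
    hammingNorm (gcwL Ds v) = 2 ^ N.card * (wfun M v.2 + wfun M (v.1 + v.2)) := by
  have h1 : hammingNorm (gcwL Ds v)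
      = ∑ x : {d // d ∈ Ds} × Fin 2, if gcwL Ds v x ≠ 0 then 1 else 0 := by
    rw [hammingNorm, Finset.card_filter]
  rw [h1, Fintype.sum_prod_type]
  have h2 : ∀ d : {d // d ∈ Ds},
      (∑ i : Fin 2, if gcwL Ds v (d, i) ≠ 0 then 1 else 0)
      = (if dotp v.2 d.1.1 ≠ 0 then 1 else 0)
        + (if dotp (v.1 + v.2) d.1.1 ≠ 0 then 1 else 0) := by
    intro d
    rw [Fin.sum_univ_two]
    have e1 : gcwL Ds v (d, 0) = dotp v.2 d.1.1 := by
      simp [gcwL, grayPair, cwL]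
    have e2 : gcwL Ds v (d, 1) = dotp v.1 d.1.1 + dotp v.2 d.1.1 := by
      simp [gcwL, grayPair, cwL]
    rw [e1, e2, dotp_add_left]
  rw [Finset.sum_congr rfl (fun d _ => h2 d)]
  rw [Finset.sum_coe_sort Ds (fun d => (if dotp v.2 d.1 ≠ 0 then 1 else 0)
        + (if dotp (v.1 + v.2) d.1 ≠ 0 then 1 else 0))]
  rw [hDs, Finset.sum_product' (f := fun t₁ _ => (if dotp v.2 t₁ ≠ 0 then 1 else 0)
        + if dotp (v.1 + v.2) t₁ ≠ 0 then 1 else 0)]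
  simp only [Finset.sum_const, smul_eq_mul]
  rw [← Finset.mul_sum, card_deltaC, Finset.sum_add_distrib, Finset.sum_boole, Finset.sum_boole]
  push_cast
  rw [wfun, wfun]

lemma cwL_inj (M N : Finset (Fin m)) (hMu : M ≠ Finset.univ)
    (Ds : Finset ((Fin m → ZMod 2) × (Fin m → ZMod 2)))
    (hDs : Ds = (deltaC M)ᶜ ×ˢ deltaC N) :
    Function.Injective (cwL Ds) := by
  obtain ⟨j, hj⟩ : ∃ j, j ∉ M := by
    by_contra h
    push_neg at h
    exact hMu (Finset.eq_univ_iff_forall.mpr h)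
  have h0N : (0 : Fin m → ZMod 2) ∈ deltaC N := by
    rw [mem_deltaC]; intro i hi; exact absurd rfl hi
  have hmem : ∀ t : Fin m → ZMod 2, t ∉ deltaC M → (t, (0 : Fin m → ZMod 2)) ∈ Ds := by
    intro t ht
    rw [hDs, Finset.mem_product]
    exact ⟨Finset.mem_compl.mpr ht, h0N⟩
  have key : ∀ x y : Fin m → ZMod 2,
      (∀ t, t ∉ deltaC M → dotp x t = dotp y t) → x = y := by
    intro x y h
    have hsingle : ∀ i : Fin m, i ∉ M → x i = y i := by
      intro i hi
      have hmem' : Pi.single i (1 : ZMod 2) ∉ deltaC M := by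
        rw [mem_deltaC]; push_neg
        exact ⟨i, by simp, hi⟩
      have := h _ hmem'
      rwa [dotp_single, dotp_single] at this
    funext i
    by_cases hiM : i ∈ M
    · have hij : i ≠ j := fun h' => hj (h' ▸ hiM)
      have hne : Pi.single i (1 : ZMod 2) + Pi.single j 1 ∉ deltaC M := by
        rw [mem_deltaC]; push_neg
        refine ⟨j, ?_, hj⟩
        have : (Pi.single i (1 : ZMod 2) + Pi.single j (1 : ZMod 2) : Fin m → ZMod 2) j = 1 := by
          rw [Pi.add_apply, Pi.single_apply, Pi.single_apply,
            if_neg (Ne.symm hij), if_pos rfl, zero_add]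
        rw [this]
        decide
      have h2 := h _ hne
      rw [dotp_add_right, dotp_add_right, dotp_single, dotp_single,
        dotp_single, dotp_single] at h2
      have hxy := hsingle j hj
      rw [hxy] at h2
      exact add_right_cancel h2
    · exact hsingle i hiM
  intro v v' h
  have hc : ∀ t, t ∉ deltaC M → dotp v.1 t = dotp v'.1 t ∧ dotp v.2 t = dotp v'.2 t := by
    intro t ht
    have := congrFun h ⟨(t, 0), hmem t ht⟩
    exact ⟨congrArg Prod.fst this, congrArg Prod.snd this⟩
  exact Prod.ext (key _ _ fun t ht => (hc t ht).1) (key _ _ fun t ht => (hc t ht).2)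

/-- The change-of-variables `(α, β) ↦ (β, α + β)`. -/
def phiE (m : ℕ) : ((Fin m → ZMod 2) × (Fin m → ZMod 2)) ≃ ((Fin m → ZMod 2) × (Fin m → ZMod 2)) where
  toFun v := (v.2, v.1 + v.2)
  invFun p := (p.1 + p.2, p.1)
  left_inv v := by
    have h : ∀ a b : ZMod 2, b + (a + b) = a := by decide
    refine Prod.ext ?_ rfl
    funext i
    exact h (v.1 i) (v.2 i)
  right_inv p := by
    have h : ∀ a b : ZMod 2, (a + b) + a = b := by decide
    refine Prod.ext rfl ?_
    funext i
    exact h (p.1 i) (p.2 i)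

lemma map_split {α : Type*} (s : Multiset α) (f : α → ℕ) (p : α → Prop) [DecidablePred p] :
    s.map f = (s.filter p).map f + (s.filter (fun x => ¬ p x)).map f := by
  rw [← Multiset.map_add, Multiset.filter_add_not]

lemma map_split3 {α : Type*} (s : Multiset α) (f : α → ℕ)
    (P Z : α → Prop) [DecidablePred P] [DecidablePred Z] (hZP : ∀ x, Z x → P x) :
    s.map f = (s.filter Z).map f + (s.filter (fun x => P x ∧ ¬ Z x)).map f
      + (s.filter (fun x => ¬ P x)).map f := by
  rw [map_split s f P, map_split (s.filter P) f Z, Multiset.filter_filter,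
    Multiset.filter_filter]
  congr 2
  · congr 1
    exact Multiset.filter_congr (fun x _ => ⟨fun h => h.1, fun h => ⟨h, hZP x h⟩⟩)
  · congr 1
    exact Multiset.filter_congr (fun x _ => and_comm)

lemma map_const_of {α : Type*} (s : Multiset α) (f : α → ℕ) (v : ℕ)
    (h : ∀ x ∈ s, f x = v) :
    s.map f = Multiset.replicate (Multiset.card s) v := by
  rw [Multiset.map_congr rfl h]
  exact Multiset.map_const' s v

lemma rep_congr {c c' v v' : ℕ} (hc : c = c') (hv : c ≠ 0 → v = v') :
    Multiset.replicate c v = Multiset.replicate c' v' := by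
  subst hc
  rcases Nat.eq_zero_or_pos c with h | h
  · simp [h]
  · rw [hv (by omega)]

lemma piece_eval {m : ℕ} (g : ((Fin m → ZMod 2) × (Fin m → ZMod 2)) → ℕ)
    (c1 c2 : (Fin m → ZMod 2) → Prop) [DecidablePred c1] [DecidablePred c2] (v : ℕ)
    (hv : ∀ p : (Fin m → ZMod 2) × (Fin m → ZMod 2), c1 p.1 → c2 p.2 → g p = v) :
    (Multiset.filter (fun p => c2 p.2 ∧ c1 p.1)
        (Finset.univ : Finset ((Fin m → ZMod 2) × (Fin m → ZMod 2))).val).map g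
      = Multiset.replicate ((Finset.univ.filter c1).card * (Finset.univ.filter c2).card) v := by
  rw [map_const_of _ g v (fun p hp => by
      rw [Multiset.mem_filter] at hp
      exact hv p hp.2.2 hp.2.1)]
  congr 1
  have h1 : Multiset.filter (fun p => c2 p.2 ∧ c1 p.1)
        (Finset.univ : Finset ((Fin m → ZMod 2) × (Fin m → ZMod 2))).val
      = (Finset.univ.filter
          (fun p : (Fin m → ZMod 2) × (Fin m → ZMod 2) => c1 p.1 ∧ c2 p.2)).val := by
    rw [Finset.filter_val]
    exact Multiset.filter_congr (fun x _ => and_comm)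
  rw [h1]
  show (Finset.univ.filter
      (fun p : (Fin m → ZMod 2) × (Fin m → ZMod 2) => c1 p.1 ∧ c2 p.2)).card = _
  rw [← Finset.univ_product_univ, Finset.filter_product, Finset.card_product]

lemma card_univ_fun : (univ : Finset (Fin m → ZMod 2)).card = 2 ^ m := by
  rw [Finset.card_univ]
  simp [Fintype.card_fun]

lemma card_filter_Z :
    ((univ : Finset (Fin m → ZMod 2)).filter (fun x => x = 0)).card = 1 := by
  rw [Finset.filter_eq', if_pos (Finset.mem_univ 0), Finset.card_singleton]

lemma filter_Q_eq (M : Finset (Fin m)) :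
    ((univ : Finset (Fin m → ZMod 2)).filter (fun x => ∀ i ∈ M, x i = 0)) = deltaC Mᶜ := by
  apply Finset.ext
  intro x
  simp only [Finset.mem_filter, Finset.mem_univ, true_and, mem_deltaC, Finset.mem_compl]
  constructor
  · intro h i hi
    by_contra hiM
    exact hi (h i hiM)
  · intro h i hi
    by_contra hx
    exact h i hx hi

lemma card_filter_Q (M : Finset (Fin m)) :
    ((univ : Finset (Fin m → ZMod 2)).filter (fun x => ∀ i ∈ M, x i = 0)).card
      = 2 ^ (m - M.card) := by
  rw [filter_Q_eq, card_deltaC]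
  congr 1
  rw [Finset.card_compl, Fintype.card_fin]

lemma card_filter_A (M : Finset (Fin m)) :
    ((univ : Finset (Fin m → ZMod 2)).filter
        (fun x => (∀ i ∈ M, x i = 0) ∧ ¬ x = 0)).card = 2 ^ (m - M.card) - 1 := by
  rw [← Finset.filter_filter]
  have h0 : (0 : Fin m → ZMod 2) ∈
      (univ : Finset (Fin m → ZMod 2)).filter (fun x => ∀ i ∈ M, x i = 0) := by
    simp
  rw [show ((univ : Finset (Fin m → ZMod 2)).filter (fun x => ∀ i ∈ M, x i = 0)).filter
        (fun x => ¬ x = 0)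
      = ((univ : Finset (Fin m → ZMod 2)).filter (fun x => ∀ i ∈ M, x i = 0)).erase 0 from by
    rw [← Finset.filter_ne']]
  rw [Finset.card_erase_of_mem h0, card_filter_Q]

lemma card_filter_B (M : Finset (Fin m)) :
    ((univ : Finset (Fin m → ZMod 2)).filter
        (fun x => ¬ ∀ i ∈ M, x i = 0)).card = 2 ^ m - 2 ^ (m - M.card) := by
  have h := Finset.card_filter_add_card_filter_not
    (s := (univ : Finset (Fin m → ZMod 2))) (p := fun x : Fin m → ZMod 2 => ∀ i ∈ M, x i = 0)
  rw [card_filter_Q, card_univ_fun] at h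
  exact Nat.eq_sub_of_add_eq' h

end Aux

theorem stmt_1 {m : ℕ} (hm : 1 ≤ m) (M N : Finset (Fin m))
    (hMu : M ≠ Finset.univ) (hMN : 1 ≤ M.card + N.card)
    (Ds : Finset ((Fin m → ZMod 2) × (Fin m → ZMod 2)))
    (hDs : Ds = (deltaC M)ᶜ ×ˢ deltaC N) :
    Ds.card = (2 ^ m - 2 ^ M.card) * 2 ^ N.card ∧
    ((Finset.univ : Finset ((Fin m → ZMod 2) × (Fin m → ZMod 2))).image (cwL Ds)).card = 2 ^ (2 * m) ∧
    (Finset.univ : Finset ((Fin m → ZMod 2) × (Fin m → ZMod 2))).val.map (fun v => hammingNorm (gcwL Ds v)) =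
      Multiset.replicate (2 ^ (2 * m - 2 * M.card) - 2 ^ (m - M.card + 1) + 1)
          (2 ^ (m + N.card)) +
      Multiset.replicate (2 ^ (m - M.card + 1) - 2)
          (2 ^ (m + N.card - 1)) +
      Multiset.replicate (2 ^ (2 * m) + 2 ^ (2 * m - 2 * M.card) - 2 ^ (2 * m - M.card + 1))
          (2 ^ (m + N.card) - 2 ^ (M.card + N.card)) +
      Multiset.replicate (2 ^ (2 * m - M.card + 1) + 2 ^ (m - M.card + 1) - 2 ^ (2 * m - 2 * M.card + 1) - 2 ^ (m + 1))
          (2 ^ (m + N.card) - 2 ^ (M.card + N.card - 1)) +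
      Multiset.replicate (2 ^ (m + 1) - 2 ^ (m - M.card + 1))
          (2 ^ (m + N.card - 1) - 2 ^ (M.card + N.card - 1)) +
      Multiset.replicate (1)
          (0) := by
  have hkm : M.card < m := by
    have h1 := Finset.card_lt_card (Finset.ssubset_univ_iff.mpr hMu)
    simpa using h1
  have hFcard : Fintype.card (Fin m → ZMod 2) = 2 ^ m := by
    simp [Fintype.card_fun]
  refine ⟨?_, ?_, ?_⟩
  · rw [hDs, Finset.card_product, Finset.card_compl, card_deltaC, card_deltaC, hFcard]
  · rw [Finset.card_image_of_injective _ (cwL_inj M N hMu Ds hDs), Finset.card_univ,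
      Fintype.card_prod, hFcard, ← pow_add, two_mul]
  -- the weight distribution
  · -- basic numeric facts
    have ha2 : 2 ≤ 2 ^ (m - M.card) := by
      have h := Nat.pow_le_pow_right (show 1 ≤ 2 by norm_num) (show 1 ≤ m - M.card by omega)
      simpa using h
    have hb1 : 1 ≤ 2 ^ M.card := Nat.one_le_two_pow
    have h2m : (2:ℕ) ^ m = 2 ^ (m - M.card) * 2 ^ M.card := by
      rw [← pow_add]; congr 1; omega
    have hm1 : (2:ℕ) ^ m = 2 ^ (m - 1) * 2 := by
      rw [← pow_succ]; congr 1; omega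
    have hle : (2:ℕ) ^ (M.card - 1) ≤ 2 ^ (m - 1) :=
      Nat.pow_le_pow_right (by norm_num) (by omega)
    have hkpos : (2:ℕ) ^ m - 2 ^ (m - M.card) ≠ 0 → 1 ≤ M.card := by
      intro h
      by_contra hk
      push_neg at hk
      have hk0 : M.card = 0 := by omega
      rw [hk0, Nat.sub_zero] at h
      omega
    have F2 : (2:ℕ) ^ (2 * m)
        = (2 ^ (m - M.card) * 2 ^ M.card) * (2 ^ (m - M.card) * 2 ^ M.card) := by
      rw [show 2 * m = (m - M.card) + (M.card + ((m - M.card) + M.card)) from by omega,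
        pow_add, pow_add, pow_add]
      ring
    have F3 : (2:ℕ) ^ (2 * m - 2 * M.card) = 2 ^ (m - M.card) * 2 ^ (m - M.card) := by
      rw [show 2 * m - 2 * M.card = (m - M.card) + (m - M.card) from by omega, pow_add]
    have F4 : (2:ℕ) ^ (m - M.card + 1) = 2 ^ (m - M.card) * 2 := by
      rw [pow_succ]
    have F5 : (2:ℕ) ^ (2 * m - M.card + 1)
        = 2 * (2 ^ (m - M.card) * 2 ^ (m - M.card) * 2 ^ M.card) := by
      rw [show 2 * m - M.card + 1 = (m - M.card) + ((m - M.card) + (M.card + 1)) from by omega,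
        pow_add, pow_add, pow_add]
      ring
    have F6 : (2:ℕ) ^ (2 * m - 2 * M.card + 1)
        = 2 * (2 ^ (m - M.card) * 2 ^ (m - M.card)) := by
      rw [show 2 * m - 2 * M.card + 1 = (m - M.card) + ((m - M.card) + 1) from by omega,
        pow_add, pow_add]
      ring
    have F7 : (2:ℕ) ^ (m + 1) = 2 * (2 ^ (m - M.card) * 2 ^ M.card) := by
      rw [show m + 1 = (m - M.card) + (M.card + 1) from by omega, pow_add, pow_add]
      ring
    -- the weight function values
    have hwz : ∀ x : Fin m → ZMod 2, x = 0 → wfun M x = 0 := by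
      intro x hx; rw [hx]; exact wfun_zero M
    have hwa : ∀ x : Fin m → ZMod 2, ((∀ i ∈ M, x i = 0) ∧ ¬ x = 0) → wfun M x = 2 ^ (m - 1) :=
      fun x h => wfun_A M x h.2 h.1
    have hwb : ∀ x : Fin m → ZMod 2, (¬ ∀ i ∈ M, x i = 0) →
        wfun M x = 2 ^ (m - 1) - 2 ^ (M.card - 1) := by
      intro x h
      have h2 := wfun_B M x h
      omega
    set g : ((Fin m → ZMod 2) × (Fin m → ZMod 2)) → ℕ :=
      fun p => 2 ^ N.card * (wfun M p.1 + wfun M p.2) with hg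
    -- step 1: change of variables
    have h1 : (Finset.univ : Finset ((Fin m → ZMod 2) × (Fin m → ZMod 2))).val.map
          (fun v => hammingNorm (gcwL Ds v))
        = Finset.univ.val.map (fun v => g ((phiE m) v)) :=
      Multiset.map_congr rfl (fun v _ => weight_eq M N Ds hDs v)
    have h2 : Finset.univ.val.map (fun v => g ((phiE m) v))
        = ((Finset.univ : Finset ((Fin m → ZMod 2) × (Fin m → ZMod 2))).val.map
            ⇑(phiE m)).map g :=
      (Multiset.map_map g ⇑(phiE m) Finset.univ.val).symm
    have h3 : (Finset.univ : Finset ((Fin m → ZMod 2) × (Fin m → ZMod 2))).val.map ⇑(phiE m)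
        = Finset.univ.val :=
      congrArg Finset.val (Finset.map_univ_equiv (phiE m))
    rw [h1, h2, h3]
    -- step 2: split into nine pieces
    have hZ1 : ∀ p : (Fin m → ZMod 2) × (Fin m → ZMod 2),
        p.1 = 0 → ∀ i ∈ M, p.1 i = 0 := by
      intro p hp i _; rw [hp]; rfl
    have hZ2 : ∀ p : (Fin m → ZMod 2) × (Fin m → ZMod 2),
        p.2 = 0 → ∀ i ∈ M, p.2 i = 0 := by
      intro p hp i _; rw [hp]; rfl
    rw [map_split3 Finset.univ.val g (fun p => ∀ i ∈ M, p.1 i = 0) (fun p => p.1 = 0) hZ1]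
    rw [map_split3 (Finset.univ.val.filter (fun p => p.1 = 0)) g
        (fun p => ∀ i ∈ M, p.2 i = 0) (fun p => p.2 = 0) hZ2]
    rw [map_split3 (Finset.univ.val.filter
          (fun p => (∀ i ∈ M, p.1 i = 0) ∧ ¬ p.1 = 0)) g
        (fun p => ∀ i ∈ M, p.2 i = 0) (fun p => p.2 = 0) hZ2]
    rw [map_split3 (Finset.univ.val.filter (fun p => ¬ ∀ i ∈ M, p.1 i = 0)) g
        (fun p => ∀ i ∈ M, p.2 i = 0) (fun p => p.2 = 0) hZ2]
    simp only [Multiset.filter_filter]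
    -- the nine pieces
    have p1 : (Multiset.filter (fun a : (Fin m → ZMod 2) × (Fin m → ZMod 2) =>
          a.2 = 0 ∧ a.1 = 0) Finset.univ.val).map g
        = Multiset.replicate (1 * 1) 0 := by
      rw [piece_eval g (fun x => x = 0) (fun x => x = 0) 0
        (fun p h1 h2 => by rw [hg]; simp only; rw [hwz _ h1, hwz _ h2]; simp)]

      rw [card_filter_Z]
    have p2 : (Multiset.filter (fun a : (Fin m → ZMod 2) × (Fin m → ZMod 2) =>
          ((∀ i ∈ M, a.2 i = 0) ∧ ¬a.2 = 0) ∧ a.1 = 0) Finset.univ.val).map g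
        = Multiset.replicate (1 * (2 ^ (m - M.card) - 1)) (2 ^ N.card * 2 ^ (m - 1)) := by
      rw [piece_eval g (fun x => x = 0) (fun x => (∀ i ∈ M, x i = 0) ∧ ¬ x = 0)
        (2 ^ N.card * 2 ^ (m - 1))
        (fun p h1 h2 => by rw [hg]; simp only; rw [hwz _ h1, hwa _ h2, Nat.zero_add])]
      rw [card_filter_Z, card_filter_A]
    have p3 : (Multiset.filter (fun a : (Fin m → ZMod 2) × (Fin m → ZMod 2) =>
          (¬∀ i ∈ M, a.2 i = 0) ∧ a.1 = 0) Finset.univ.val).map g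
        = Multiset.replicate (1 * (2 ^ m - 2 ^ (m - M.card)))
            (2 ^ N.card * (2 ^ (m - 1) - 2 ^ (M.card - 1))) := by
      rw [piece_eval g (fun x => x = 0) (fun x => ¬ ∀ i ∈ M, x i = 0)
        (2 ^ N.card * (2 ^ (m - 1) - 2 ^ (M.card - 1)))
        (fun p h1 h2 => by rw [hg]; simp only; rw [hwz _ h1, hwb _ h2, Nat.zero_add])]
      rw [card_filter_Z, card_filter_B]
    have p4 : (Multiset.filter (fun a : (Fin m → ZMod 2) × (Fin m → ZMod 2) =>
          a.2 = 0 ∧ (∀ i ∈ M, a.1 i = 0) ∧ ¬a.1 = 0) Finset.univ.val).map g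
        = Multiset.replicate ((2 ^ (m - M.card) - 1) * 1) (2 ^ N.card * 2 ^ (m - 1)) := by
      rw [piece_eval g (fun x => (∀ i ∈ M, x i = 0) ∧ ¬ x = 0) (fun x => x = 0)
        (2 ^ N.card * 2 ^ (m - 1))
        (fun p h1 h2 => by rw [hg]; simp only; rw [hwa _ h1, hwz _ h2, Nat.add_zero])]
      rw [card_filter_Z, card_filter_A]
    have p5 : (Multiset.filter (fun a : (Fin m → ZMod 2) × (Fin m → ZMod 2) =>
          ((∀ i ∈ M, a.2 i = 0) ∧ ¬a.2 = 0) ∧ (∀ i ∈ M, a.1 i = 0) ∧ ¬a.1 = 0)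
          Finset.univ.val).map g
        = Multiset.replicate ((2 ^ (m - M.card) - 1) * (2 ^ (m - M.card) - 1))
            (2 ^ N.card * (2 ^ (m - 1) + 2 ^ (m - 1))) := by
      rw [piece_eval g (fun x => (∀ i ∈ M, x i = 0) ∧ ¬ x = 0)
        (fun x => (∀ i ∈ M, x i = 0) ∧ ¬ x = 0)
        (2 ^ N.card * (2 ^ (m - 1) + 2 ^ (m - 1)))
        (fun p h1 h2 => by rw [hg]; simp only; rw [hwa _ h1, hwa _ h2])]
      rw [card_filter_A]
    have p6 : (Multiset.filter (fun a : (Fin m → ZMod 2) × (Fin m → ZMod 2) =>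
          (¬∀ i ∈ M, a.2 i = 0) ∧ (∀ i ∈ M, a.1 i = 0) ∧ ¬a.1 = 0) Finset.univ.val).map g
        = Multiset.replicate ((2 ^ (m - M.card) - 1) * (2 ^ m - 2 ^ (m - M.card)))
            (2 ^ N.card * (2 ^ (m - 1) + (2 ^ (m - 1) - 2 ^ (M.card - 1)))) := by
      rw [piece_eval g (fun x => (∀ i ∈ M, x i = 0) ∧ ¬ x = 0)
        (fun x => ¬ ∀ i ∈ M, x i = 0)
        (2 ^ N.card * (2 ^ (m - 1) + (2 ^ (m - 1) - 2 ^ (M.card - 1))))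
        (fun p h1 h2 => by rw [hg]; simp only; rw [hwa _ h1, hwb _ h2])]
      rw [card_filter_A, card_filter_B]
    have p7 : (Multiset.filter (fun a : (Fin m → ZMod 2) × (Fin m → ZMod 2) =>
          a.2 = 0 ∧ ¬∀ i ∈ M, a.1 i = 0) Finset.univ.val).map g
        = Multiset.replicate ((2 ^ m - 2 ^ (m - M.card)) * 1)
            (2 ^ N.card * (2 ^ (m - 1) - 2 ^ (M.card - 1))) := by
      rw [piece_eval g (fun x => ¬ ∀ i ∈ M, x i = 0) (fun x => x = 0)
        (2 ^ N.card * (2 ^ (m - 1) - 2 ^ (M.card - 1)))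
        (fun p h1 h2 => by rw [hg]; simp only; rw [hwb _ h1, hwz _ h2, Nat.add_zero])]
      rw [card_filter_Z, card_filter_B]
    have p8 : (Multiset.filter (fun a : (Fin m → ZMod 2) × (Fin m → ZMod 2) =>
          ((∀ i ∈ M, a.2 i = 0) ∧ ¬a.2 = 0) ∧ ¬∀ i ∈ M, a.1 i = 0) Finset.univ.val).map g
        = Multiset.replicate ((2 ^ m - 2 ^ (m - M.card)) * (2 ^ (m - M.card) - 1))
            (2 ^ N.card * (2 ^ (m - 1) + (2 ^ (m - 1) - 2 ^ (M.card - 1)))) := by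
      rw [piece_eval g (fun x => ¬ ∀ i ∈ M, x i = 0)
        (fun x => (∀ i ∈ M, x i = 0) ∧ ¬ x = 0)
        (2 ^ N.card * (2 ^ (m - 1) + (2 ^ (m - 1) - 2 ^ (M.card - 1))))
        (fun p h1 h2 => by rw [hg]; simp only; rw [hwb _ h1, hwa _ h2,
          Nat.add_comm (2 ^ (m - 1) - 2 ^ (M.card - 1)) (2 ^ (m - 1))])]
      rw [card_filter_A, card_filter_B]
    have p9 : (Multiset.filter (fun a : (Fin m → ZMod 2) × (Fin m → ZMod 2) =>
          (¬∀ i ∈ M, a.2 i = 0) ∧ ¬∀ i ∈ M, a.1 i = 0) Finset.univ.val).map g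
        = Multiset.replicate ((2 ^ m - 2 ^ (m - M.card)) * (2 ^ m - 2 ^ (m - M.card)))
            (2 ^ N.card * ((2 ^ (m - 1) - 2 ^ (M.card - 1)) + (2 ^ (m - 1) - 2 ^ (M.card - 1)))) := by
      rw [piece_eval g (fun x => ¬ ∀ i ∈ M, x i = 0) (fun x => ¬ ∀ i ∈ M, x i = 0)
        (2 ^ N.card * ((2 ^ (m - 1) - 2 ^ (M.card - 1)) + (2 ^ (m - 1) - 2 ^ (M.card - 1))))
        (fun p h1 h2 => by rw [hg]; simp only; rw [hwb _ h1, hwb _ h2])]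
      rw [card_filter_B]
    rw [p1, p2, p3, p4, p5, p6, p7, p8, p9]
    simp only [one_mul, mul_one]
    have hG1 : Multiset.replicate (2 ^ (2 * m - 2 * M.card) - 2 ^ (m - M.card + 1) + 1)
          (2 ^ (m + N.card))
        = Multiset.replicate ((2 ^ (m - M.card) - 1) * (2 ^ (m - M.card) - 1))
            (2 ^ N.card * (2 ^ (m - 1) + 2 ^ (m - 1))) := by
      apply rep_congr
      · rw [F3, F4]
        obtain ⟨α, hα⟩ : ∃ α, (2:ℕ) ^ (m - M.card) = α + 2 := ⟨2 ^ (m - M.card) - 2, by omega⟩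
        rw [hα, show α + 2 - 1 = α + 1 from by omega]
        have r1 : (α+1)*(α+1) = α*α + 2*α + 1 := by ring
        have r2 : (α+2)*(α+2) = α*α + 4*α + 4 := by ring
        omega
      · intro _
        rw [show (2:ℕ)^(m-1) + 2^(m-1) = 2^m from by omega, ← pow_add,
          show N.card + m = m + N.card from by omega]
    have hG2 : Multiset.replicate (2 ^ (m - M.card + 1) - 2) (2 ^ (m + N.card - 1))
        = Multiset.replicate (2 ^ (m - M.card) - 1) (2 ^ N.card * 2 ^ (m - 1))
          + Multiset.replicate (2 ^ (m - M.card) - 1) (2 ^ N.card * 2 ^ (m - 1)) := by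
      rw [← Multiset.replicate_add]
      apply rep_congr
      · rw [F4]; omega
      · intro _
        rw [← pow_add, show N.card + (m-1) = m + N.card - 1 from by omega]
    have hG3 : Multiset.replicate (2 ^ (2 * m) + 2 ^ (2 * m - 2 * M.card) - 2 ^ (2 * m - M.card + 1))
          (2 ^ (m + N.card) - 2 ^ (M.card + N.card))
        = Multiset.replicate ((2 ^ m - 2 ^ (m - M.card)) * (2 ^ m - 2 ^ (m - M.card)))
            (2 ^ N.card * ((2 ^ (m - 1) - 2 ^ (M.card - 1)) + (2 ^ (m - 1) - 2 ^ (M.card - 1)))) := by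
      apply rep_congr
      · rw [F2, F3, F5, h2m]
        obtain ⟨α, hα⟩ : ∃ α, (2:ℕ) ^ (m - M.card) = α + 2 := ⟨2 ^ (m - M.card) - 2, by omega⟩
        obtain ⟨β, hβ⟩ : ∃ β, (2:ℕ) ^ M.card = β + 1 := ⟨2 ^ M.card - 1, by omega⟩
        rw [hα, hβ]
        have h0 : (α+2)*(β+1) - (α+2) = (α+2)*β := by
          have : (α+2)*(β+1) = (α+2)*β + (α+2) := by ring
          omega
        rw [h0]
        have h1 : ((α+2)*β)*((α+2)*β) = α*α*(β*β) + 4*(α*(β*β)) + 4*(β*β) := by ring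
        have h2 : ((α+2)*(β+1))*((α+2)*(β+1)) =
            α*α*(β*β) + 4*(α*(β*β)) + 4*(β*β) + 2*(α*α*β) + 8*(α*β) + 8*β + α*α + 4*α + 4 := by
          ring
        have h3 : (α+2)*(α+2) = α*α + 4*α + 4 := by ring
        have h4 : 2*((α+2)*(α+2)*(β+1)) =
            2*(α*α*β) + 8*(α*β) + 8*β + 2*(α*α) + 8*α + 8 := by ring
        omega
      · intro hc
        have hk : 1 ≤ M.card := by
          by_contra hk0
          push_neg at hk0
          have h00 : M.card = 0 := by omega
          apply hc
          rw [h00]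
          have e1 : (2:ℕ) ^ (2*m - 2*0) = 2 ^ (2*m) := by norm_num
          have e2 : (2:ℕ) ^ (2*m - 0 + 1) = 2 ^ (2*m) * 2 := by
            rw [show 2*m - 0 + 1 = 2*m + 1 from by omega, pow_succ]
          omega
        have hk2 : (2:ℕ) ^ M.card = 2 ^ (M.card - 1) * 2 := by
          rw [← pow_succ]; congr 1; omega
        rw [show (2:ℕ)^(m-1) - 2^(M.card-1) + ((2:ℕ)^(m-1) - 2^(M.card-1))
            = 2^m - 2^M.card from by omega,
          Nat.mul_sub, ← pow_add, ← pow_add, show N.card + m = m + N.card from by omega,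
          show N.card + M.card = M.card + N.card from by omega]
    have hG4 : Multiset.replicate
          (2 ^ (2 * m - M.card + 1) + 2 ^ (m - M.card + 1) - 2 ^ (2 * m - 2 * M.card + 1) - 2 ^ (m + 1))
          (2 ^ (m + N.card) - 2 ^ (M.card + N.card - 1))
        = Multiset.replicate ((2 ^ (m - M.card) - 1) * (2 ^ m - 2 ^ (m - M.card)))
            (2 ^ N.card * (2 ^ (m - 1) + (2 ^ (m - 1) - 2 ^ (M.card - 1))))
          + Multiset.replicate ((2 ^ m - 2 ^ (m - M.card)) * (2 ^ (m - M.card) - 1))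
            (2 ^ N.card * (2 ^ (m - 1) + (2 ^ (m - 1) - 2 ^ (M.card - 1)))) := by
      rw [← Multiset.replicate_add]
      apply rep_congr
      · rw [F5, F4, F6, F7, h2m]
        obtain ⟨α, hα⟩ : ∃ α, (2:ℕ) ^ (m - M.card) = α + 2 := ⟨2 ^ (m - M.card) - 2, by omega⟩
        obtain ⟨β, hβ⟩ : ∃ β, (2:ℕ) ^ M.card = β + 1 := ⟨2 ^ M.card - 1, by omega⟩
        rw [hα, hβ]
        have h0 : (α+2)*(β+1) - (α+2) = (α+2)*β := by
          have : (α+2)*(β+1) = (α+2)*β + (α+2) := by ring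
          omega
        have h0' : α + 2 - 1 = α + 1 := by omega
        rw [h0, h0']
        have h1 : (α+1)*((α+2)*β) = α*(α*β) + 3*(α*β) + 2*β := by ring
        have h1' : ((α+2)*β)*(α+1) = α*(α*β) + 3*(α*β) + 2*β := by ring
        have h2 : 2*((α+2)*(α+2)*(β+1)) =
            2*(α*(α*β)) + 8*(α*β) + 8*β + 2*(α*α) + 8*α + 8 := by ring
        have h3 : (α+2)*(α+2) = α*α + 4*α + 4 := by ring
        have h4 : 2*((α+2)*(β+1)) = 2*(α*β) + 2*α + 4*β + 4 := by ring
        omega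
      · intro hc
        have hk : 1 ≤ M.card := by
          by_contra hk0
          push_neg at hk0
          have h00 : M.card = 0 := by omega
          apply hc
          rw [h00]
          have e1 : (2:ℕ) ^ (2*m - 0 + 1) = 2 ^ (2*m + 1) := by norm_num
          have e2 : (2:ℕ) ^ (2*m - 2*0 + 1) = 2 ^ (2*m + 1) := by norm_num
          have e3 : (2:ℕ) ^ (m - 0 + 1) = 2 ^ (m + 1) := by norm_num
          omega
        have hk2 : (2:ℕ) ^ M.card = 2 ^ (M.card - 1) * 2 := by
          rw [← pow_succ]; congr 1; omega
        rw [show (2:ℕ)^(m-1) + ((2:ℕ)^(m-1) - 2^(M.card-1))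
            = 2^m - 2^(M.card-1) from by omega,
          Nat.mul_sub, ← pow_add, ← pow_add, show N.card + m = m + N.card from by omega,
          show N.card + (M.card - 1) = M.card + N.card - 1 from by omega]
    have hG5 : Multiset.replicate (2 ^ (m + 1) - 2 ^ (m - M.card + 1))
          (2 ^ (m + N.card - 1) - 2 ^ (M.card + N.card - 1))
        = Multiset.replicate (2 ^ m - 2 ^ (m - M.card))
            (2 ^ N.card * (2 ^ (m - 1) - 2 ^ (M.card - 1)))
          + Multiset.replicate (2 ^ m - 2 ^ (m - M.card))
            (2 ^ N.card * (2 ^ (m - 1) - 2 ^ (M.card - 1))) := by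
      rw [← Multiset.replicate_add]
      apply rep_congr
      · rw [F7, F4, h2m]; omega
      · intro hc
        have hk : 1 ≤ M.card := by
          by_contra hk0
          push_neg at hk0
          have h00 : M.card = 0 := by omega
          apply hc
          rw [h00]
          have e1 : (2:ℕ) ^ (m - 0 + 1) = 2 ^ (m + 1) := by norm_num
          omega
        have hk2 : (2:ℕ) ^ M.card = 2 ^ (M.card - 1) * 2 := by
          rw [← pow_succ]; congr 1; omega
        rw [Nat.mul_sub, ← pow_add, ← pow_add,
          show N.card + (m - 1) = m + N.card - 1 from by omega,
          show N.card + (M.card - 1) = M.card + N.card - 1 from by omega]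
    rw [hG1, hG2, hG3, hG4, hG5]
    abel
end

section
/- Let m ≥ 1, let M, N ⊆ [m] with ∅ ≠ M ⊊ [m] and N ⊊ [m], and let D = aΔ_M^c + cΔ_N^c ⊆ E^m. Then the linear left-E-code C^L_D has length |D| = (2^m−2^{|M|})(2^m−2^{|N|}) and size |C^L_D| = 2^{2m}, and the multiset {wt_Lee(c^L_D(v)) : v ∈ E^m} (with multiplicity over all 2^{2m} elements v ∈ E^m) consists of: 2^m(2^m−2^{|N|}) with multiplicity 2^{2m−2|M|}−2^{m−|M|+1}+1; 2^{m−1}(2^m−2^{|N|}) with multiplicity 2^{m−|M|+1}−2; (2^m−2^{|M|})(2^m−2^{|N|}) with multiplicity 2^{2m}−2^{2m−|M|+1}+2^{2m−2|M|}; (2^m−2^{|M|−1})(2^m−2^{|N|}) with multiplicity 2^{2m−|M|+1}−2^{2m−2|M|+1}−2^{m+1}+2^{m−|M|+1}; (2^{m−1}−2^{|M|−1})(2^m−2^{|N|}) with multiplicity 2^{m+1}−2^{m−|M|+1}; and 0 with multiplicity 1. -/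
open Finset

/-! ### Auxiliary lemmas -/

lemma aux_card_deltaC {m : ℕ} (M : Finset (Fin m)) : (deltaC M).card = 2 ^ M.card := by
  have : (deltaC M).card = (Finset.univ : Finset (↥M → ZMod 2)).card := by
    apply Finset.card_nbij' (fun w => fun j : ↥M => w j.1)
      (fun g => fun i => if h : i ∈ M then g ⟨i, h⟩ else 0)
    · intro a ha; exact Finset.mem_univ _
    · intro g hg
      simp only [deltaC, Finset.mem_coe, Finset.mem_filter, Finset.mem_univ, true_and]
      intro i hi
      by_contra hiM
      simp [hiM] at hi
    · intro a ha
      funext i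
      by_cases h : i ∈ M
      · simp [h]
      · simp only [h, dif_neg, not_false_iff]
        simp only [deltaC, Finset.mem_coe, Finset.mem_filter] at ha
        by_contra h0
        exact h (ha.2 i (Ne.symm h0))
    · intro g hg; funext j; simp
  rw [this, Finset.card_univ]
  simp

lemma aux_zmod2_ne_zero {x : ZMod 2} (h : x ≠ 0) : x = 1 := by revert h; revert x; decide

lemma aux_dotp_add_left {m : ℕ} (x y t : Fin m → ZMod 2) :
    dotp (x + y) t = dotp x t + dotp y t := by
  simp [dotp, add_mul, Finset.sum_add_distrib]

lemma aux_dotp_add_right {m : ℕ} (γ x y : Fin m → ZMod 2) :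
    dotp γ (x + y) = dotp γ x + dotp γ y := by
  simp [dotp, mul_add, Finset.sum_add_distrib]

lemma aux_dotp_single {m : ℕ} (γ : Fin m → ZMod 2) (i : Fin m) :
    dotp γ (Pi.single i 1) = γ i := by
  unfold dotp
  rw [Finset.sum_eq_single i]
  · simp
  · intro j _ hj; simp [Pi.single_eq_of_ne hj]
  · simp

lemma aux_half_count {m : ℕ} (S : Finset (Fin m → ZMod 2)) (γ : Fin m → ZMod 2) (i : Fin m)
    (hi : γ i ≠ 0) (hS : ∀ t ∈ S, t + Pi.single i 1 ∈ S) :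
    2 * (S.filter (fun t => dotp γ t = 1)).card = S.card := by
  have hγi : γ i = 1 := aux_zmod2_ne_zero hi
  have hinv : ∀ t : Fin m → ZMod 2, t + Pi.single i 1 + Pi.single i 1 = t := by
    intro t
    rw [add_assoc]
    have : (Pi.single i 1 : Fin m → ZMod 2) + Pi.single i 1 = 0 := by
      funext j; simp [CharTwo.add_self_eq_zero]
    rw [this, add_zero]
  have hd : ∀ t : Fin m → ZMod 2, dotp γ (t + Pi.single i 1) = dotp γ t + 1 := by
    intro t; rw [aux_dotp_add_right, aux_dotp_single, hγi]
  have key : (S.filter (fun t => dotp γ t = 1)).card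
      = (S.filter (fun t => ¬ dotp γ t = 1)).card := by
    apply Finset.card_nbij' (fun t => t + Pi.single i 1) (fun t => t + Pi.single i 1)
    · intro t ht
      simp only [Finset.mem_coe, Finset.mem_filter] at ht ⊢
      refine ⟨hS t ht.1, ?_⟩
      rw [hd, ht.2]
      decide
    · intro t ht
      simp only [Finset.mem_coe, Finset.mem_filter] at ht ⊢
      refine ⟨hS t ht.1, ?_⟩
      rw [hd]
      have := ht.2
      have h0 : dotp γ t = 0 := by
        rcases (by decide : ∀ x : ZMod 2, x = 0 ∨ x = 1) (dotp γ t) with h | h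
        · exact h
        · exact absurd h this
      rw [h0]; decide
    · intro t _; exact hinv t
    · intro t _; exact hinv t
  have := Finset.card_filter_add_card_filter_not (s := S)
    (p := fun t => dotp γ t = 1)
  omega

def F1 {m : ℕ} (A : Finset (Fin m → ZMod 2)) (γ : Fin m → ZMod 2) : ℕ :=
  (A.filter (fun t => dotp γ t = 1)).card

lemma aux_F1_zero {m : ℕ} (A : Finset (Fin m → ZMod 2)) : F1 A 0 = 0 := by
  unfold F1
  rw [Finset.card_eq_zero, Finset.filter_eq_empty_iff]
  intro t _
  simp [dotp]

lemma aux_F1_add_compl {m : ℕ} (S : Finset (Fin m → ZMod 2)) (γ : Fin m → ZMod 2) :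
    F1 S γ + F1 Sᶜ γ = F1 Finset.univ γ := by
  unfold F1
  rw [← Finset.card_union_of_disjoint, ← Finset.filter_union, Finset.union_compl]
  exact Finset.disjoint_filter_filter (disjoint_compl_right)

lemma aux_F1_deltaC_disj {m : ℕ} (M : Finset (Fin m)) (γ : Fin m → ZMod 2)
    (h : ∀ i ∈ M, γ i = 0) : F1 (deltaC M) γ = 0 := by
  unfold F1
  rw [Finset.card_eq_zero, Finset.filter_eq_empty_iff]
  intro t ht
  have h0 : dotp γ t = 0 := by
    apply Finset.sum_eq_zero
    intro i _
    by_cases hti : t i = 0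
    · simp [hti]
    · have : i ∈ M := by
        simp only [deltaC, Finset.mem_filter] at ht
        exact ht.2 i hti
      simp [h i this]
  simp [h0]

lemma aux_F1_univ {m : ℕ} (γ : Fin m → ZMod 2) (h : γ ≠ 0) :
    2 * F1 Finset.univ γ = 2 ^ m := by
  obtain ⟨i, hi⟩ : ∃ i, γ i ≠ 0 := by
    by_contra hc
    push_neg at hc
    exact h (funext hc)
  have := aux_half_count Finset.univ γ i hi (fun t _ => Finset.mem_univ _)
  rw [Finset.card_univ] at this
  unfold F1
  rw [this]
  simp

lemma aux_F1_deltaC {m : ℕ} (M : Finset (Fin m)) (γ : Fin m → ZMod 2) (i : Fin m)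
    (hiM : i ∈ M) (hi : γ i ≠ 0) :
    2 * F1 (deltaC M) γ = 2 ^ M.card := by
  have hS : ∀ t ∈ deltaC M, t + Pi.single i 1 ∈ deltaC M := by
    intro t ht
    simp only [deltaC, Finset.mem_filter, Finset.mem_univ, true_and] at ht ⊢
    intro j hj
    by_cases hji : j = i
    · exact hji ▸ hiM
    · apply ht j
      simpa [Pi.single_eq_of_ne hji] using hj
  have := aux_half_count (deltaC M) γ i hi hS
  unfold F1
  rw [this, aux_card_deltaC]

lemma aux_ind_ne {x : ZMod 2} : (if x ≠ 0 then (1:ℕ) else 0) = (if x = 1 then 1 else 0) := by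
  rcases (by decide : ∀ y : ZMod 2, y = 0 ∨ y = 1) x with h | h <;> simp [h]

lemma aux_weight_formula {m : ℕ} (A B : Finset (Fin m → ZMod 2))
    (Ds : Finset ((Fin m → ZMod 2) × (Fin m → ZMod 2))) (hDs : Ds = A ×ˢ B)
    (v : (Fin m → ZMod 2) × (Fin m → ZMod 2)) :
    hammingNorm (gcwL Ds v) = B.card * (F1 A v.2 + F1 A (v.1 + v.2)) := by
  unfold hammingNorm
  rw [Finset.card_filter]
  rw [Fintype.sum_prod_type]
  have step1 : ∀ d : {d // d ∈ Ds},
      (∑ i : Fin 2, if gcwL Ds v (d, i) ≠ 0 then (1:ℕ) else 0)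
      = (if dotp v.2 d.1.1 = 1 then 1 else 0)
        + (if dotp (v.1 + v.2) d.1.1 = 1 then 1 else 0) := by
    intro d
    rw [Fin.sum_univ_two]
    unfold gcwL cwL grayPair
    simp only [Matrix.cons_val_zero, Matrix.cons_val_one, Matrix.head_cons]
    rw [aux_dotp_add_left]
    congr 1 <;> exact aux_ind_ne
  rw [Finset.sum_congr rfl (fun d _ => step1 d)]
  rw [Finset.sum_coe_sort Ds
    (fun d => (if dotp v.2 d.1 = 1 then (1:ℕ) else 0) + (if dotp (v.1 + v.2) d.1 = 1 then 1 else 0))]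
  rw [hDs, Finset.sum_product]
  rw [Finset.sum_comm]
  dsimp only
  rw [Finset.sum_const_nat (m := ∑ x ∈ A, ((if dotp v.2 x = 1 then 1 else 0) + if dotp (v.1 + v.2) x = 1 then 1 else 0)) (fun _ _ => rfl)]
  congr 1
  rw [Finset.sum_add_distrib]
  unfold F1
  rw [Finset.card_filter, Finset.card_filter]

def typ {m : ℕ} (M : Finset (Fin m)) (γ : Fin m → ZMod 2) : ℕ :=
  if γ = 0 then 0 else if ∀ i ∈ M, γ i = 0 then 1 else 2

def cls {m : ℕ} (M : Finset (Fin m)) (v : (Fin m → ZMod 2) × (Fin m → ZMod 2)) : ℕ :=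
  typ M v.2 + typ M (v.1 + v.2) + 2 * (typ M v.2 * typ M (v.1 + v.2))

def ftv (m k j : ℕ) : ℕ :=
  if j = 0 then 0 else if j = 1 then 2 ^ (m - 1) else 2 ^ (m - 1) - 2 ^ (k - 1)

lemma aux_typ_cases {m : ℕ} (M : Finset (Fin m)) (γ : Fin m → ZMod 2) :
    typ M γ = 0 ∨ typ M γ = 1 ∨ typ M γ = 2 := by
  unfold typ; split_ifs <;> simp

lemma aux_typ_zero_iff {m : ℕ} (M : Finset (Fin m)) (γ : Fin m → ZMod 2) :
    typ M γ = 0 ↔ γ = 0 := by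
  unfold typ; split_ifs with h1 h2 <;> simp [h1]

lemma aux_typ_one_iff {m : ℕ} (M : Finset (Fin m)) (γ : Fin m → ZMod 2) :
    typ M γ = 1 ↔ (γ ≠ 0 ∧ ∀ i ∈ M, γ i = 0) := by
  unfold typ; split_ifs with h1 h2
  · simp [h1]
  · simpa [h1] using h2
  · simp [h1, h2]

lemma aux_typ_two_iff {m : ℕ} (M : Finset (Fin m)) (γ : Fin m → ZMod 2) :
    typ M γ = 2 ↔ ¬ (∀ i ∈ M, γ i = 0) := by
  unfold typ; split_ifs with h1 h2
  · exact iff_of_false (by decide) (not_not_intro (fun i _ => by rw [h1]; rfl))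
  · exact iff_of_false (by decide) (not_not_intro h2)
  · exact iff_of_true rfl h2

lemma aux_cls_values {m : ℕ} (M : Finset (Fin m)) (v : (Fin m → ZMod 2) × (Fin m → ZMod 2)) :
    cls M v = 0 ∨ cls M v = 1 ∨ cls M v = 2 ∨ cls M v = 4 ∨ cls M v = 7 ∨ cls M v = 12 := by
  rcases aux_typ_cases M v.2 with h1 | h1 | h1 <;>
    rcases aux_typ_cases M (v.1 + v.2) with h2 | h2 | h2 <;>
    simp [cls, h1, h2]

lemma aux_cls_eq_zero_iff {m : ℕ} (M : Finset (Fin m)) (v : (Fin m → ZMod 2) × (Fin m → ZMod 2)) :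
    cls M v = 0 ↔ (typ M v.2 = 0 ∧ typ M (v.1 + v.2) = 0) := by
  rcases aux_typ_cases M v.2 with h1 | h1 | h1 <;>
    rcases aux_typ_cases M (v.1 + v.2) with h2 | h2 | h2 <;>
    simp [cls, h1, h2]

lemma aux_cls_eq_one_iff {m : ℕ} (M : Finset (Fin m)) (v : (Fin m → ZMod 2) × (Fin m → ZMod 2)) :
    cls M v = 1 ↔ ((typ M v.2 = 0 ∧ typ M (v.1 + v.2) = 1) ∨ (typ M v.2 = 1 ∧ typ M (v.1 + v.2) = 0)) := by
  rcases aux_typ_cases M v.2 with h1 | h1 | h1 <;>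
    rcases aux_typ_cases M (v.1 + v.2) with h2 | h2 | h2 <;>
    simp [cls, h1, h2]

lemma aux_cls_eq_two_iff {m : ℕ} (M : Finset (Fin m)) (v : (Fin m → ZMod 2) × (Fin m → ZMod 2)) :
    cls M v = 2 ↔ ((typ M v.2 = 0 ∧ typ M (v.1 + v.2) = 2) ∨ (typ M v.2 = 2 ∧ typ M (v.1 + v.2) = 0)) := by
  rcases aux_typ_cases M v.2 with h1 | h1 | h1 <;>
    rcases aux_typ_cases M (v.1 + v.2) with h2 | h2 | h2 <;>
    simp [cls, h1, h2]

lemma aux_cls_eq_four_iff {m : ℕ} (M : Finset (Fin m)) (v : (Fin m → ZMod 2) × (Fin m → ZMod 2)) :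
    cls M v = 4 ↔ (typ M v.2 = 1 ∧ typ M (v.1 + v.2) = 1) := by
  rcases aux_typ_cases M v.2 with h1 | h1 | h1 <;>
    rcases aux_typ_cases M (v.1 + v.2) with h2 | h2 | h2 <;>
    simp [cls, h1, h2]

lemma aux_cls_eq_seven_iff {m : ℕ} (M : Finset (Fin m)) (v : (Fin m → ZMod 2) × (Fin m → ZMod 2)) :
    cls M v = 7 ↔ ((typ M v.2 = 1 ∧ typ M (v.1 + v.2) = 2) ∨ (typ M v.2 = 2 ∧ typ M (v.1 + v.2) = 1)) := by
  rcases aux_typ_cases M v.2 with h1 | h1 | h1 <;>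
    rcases aux_typ_cases M (v.1 + v.2) with h2 | h2 | h2 <;>
    simp [cls, h1, h2]

lemma aux_cls_eq_twelve_iff {m : ℕ} (M : Finset (Fin m)) (v : (Fin m → ZMod 2) × (Fin m → ZMod 2)) :
    cls M v = 12 ↔ (typ M v.2 = 2 ∧ typ M (v.1 + v.2) = 2) := by
  rcases aux_typ_cases M v.2 with h1 | h1 | h1 <;>
    rcases aux_typ_cases M (v.1 + v.2) with h2 | h2 | h2 <;>
    simp [cls, h1, h2]

lemma aux_card_fn (m : ℕ) : Fintype.card (Fin m → ZMod 2) = 2 ^ m := by simp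

lemma aux_filter_Z_eq {m : ℕ} (M : Finset (Fin m)) :
    (Finset.univ.filter (fun γ : Fin m → ZMod 2 => ∀ i ∈ M, γ i = 0)) = deltaC Mᶜ := by
  ext γ
  simp only [deltaC, Finset.mem_filter, Finset.mem_univ, true_and, Finset.mem_compl]
  constructor
  · intro h i hi him
    exact hi (h i him)
  · intro h i hiM
    by_contra h0
    exact (h i h0) hiM

lemma aux_card_Z {m : ℕ} (M : Finset (Fin m)) :
    (Finset.univ.filter (fun γ : Fin m → ZMod 2 => ∀ i ∈ M, γ i = 0)).card
      = 2 ^ (m - M.card) := by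
  rw [aux_filter_Z_eq, aux_card_deltaC, Finset.card_compl, Fintype.card_fin]

lemma aux_cnt0 {m : ℕ} (M : Finset (Fin m)) :
    (Finset.univ.filter (fun γ : Fin m → ZMod 2 => typ M γ = 0)).card = 1 := by
  have : (Finset.univ.filter (fun γ : Fin m → ZMod 2 => typ M γ = 0)) = {0} := by
    ext γ
    simp [aux_typ_zero_iff]
  rw [this, Finset.card_singleton]

lemma aux_cnt1 {m : ℕ} (M : Finset (Fin m)) :
    (Finset.univ.filter (fun γ : Fin m → ZMod 2 => typ M γ = 1)).card
      = 2 ^ (m - M.card) - 1 := by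
  have he : (Finset.univ.filter (fun γ : Fin m → ZMod 2 => typ M γ = 1))
      = (Finset.univ.filter (fun γ : Fin m → ZMod 2 => ∀ i ∈ M, γ i = 0)).erase 0 := by
    ext γ
    simp only [Finset.mem_filter, Finset.mem_univ, true_and, Finset.mem_erase, aux_typ_one_iff]
  rw [he, Finset.card_erase_of_mem, aux_card_Z]
  simp only [Finset.mem_filter, Finset.mem_univ, true_and]
  intro i _; rfl

lemma aux_cnt2 {m : ℕ} (M : Finset (Fin m)) :
    (Finset.univ.filter (fun γ : Fin m → ZMod 2 => typ M γ = 2)).card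
      = 2 ^ m - 2 ^ (m - M.card) := by
  have he : (Finset.univ.filter (fun γ : Fin m → ZMod 2 => typ M γ = 2))
      = (Finset.univ.filter (fun γ : Fin m → ZMod 2 => ∀ i ∈ M, γ i = 0))ᶜ := by
    ext γ
    simp [aux_typ_two_iff]
  rw [he, Finset.card_compl, aux_card_Z, aux_card_fn]

lemma aux_count_pair {m : ℕ} (M : Finset (Fin m)) (i j : ℕ) :
    (Finset.univ.filter (fun v : (Fin m → ZMod 2) × (Fin m → ZMod 2) =>
        typ M v.2 = i ∧ typ M (v.1 + v.2) = j)).card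
      = (Finset.univ.filter (fun γ : Fin m → ZMod 2 => typ M γ = i)).card
        * (Finset.univ.filter (fun γ : Fin m → ZMod 2 => typ M γ = j)).card := by
  rw [← Finset.card_product]
  apply Finset.card_nbij' (fun v => (v.2, v.1 + v.2)) (fun p => (p.1 + p.2, p.1))
  · intro v hv
    simp only [Finset.mem_coe, Finset.mem_filter, Finset.mem_univ, true_and] at hv
    simp only [Finset.mem_coe, Finset.mem_product, Finset.mem_filter, Finset.mem_univ, true_and]
    exact hv
  · intro p hp
    simp only [Finset.mem_coe, Finset.mem_product, Finset.mem_filter, Finset.mem_univ, true_and] at hp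
    simp only [Finset.mem_coe, Finset.mem_filter, Finset.mem_univ, true_and]
    constructor
    · exact hp.1
    · have : p.1 + p.2 + p.1 = p.2 := by
        funext x
        exact (by decide : ∀ a b : ZMod 2, a + b + a = b) _ _
      rw [this]
      exact hp.2
  · intro v _
    have h1 : ∀ a b : ZMod 2, a + (b + a) = b := by decide
    ext x
    · exact h1 _ _
    · rfl
  · intro p _
    have h2 : ∀ a b : ZMod 2, a + b + a = b := by decide
    ext x
    · rfl
    · exact h2 _ _

lemma aux_peel {V : Type*} (s : Multiset V) (p : V → Prop) [DecidablePred p] (g : V → ℕ)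
    (w cnt : ℕ) (hw : ∀ v ∈ s, p v → g v = w)
    (hc : Multiset.card (s.filter p) = cnt) :
    s.map g = Multiset.replicate cnt w + (s.filter (fun v => ¬ p v)).map g := by
  conv_lhs => rw [← Multiset.filter_add_not p s]
  rw [Multiset.map_add]
  congr 1
  have he : (s.filter p).map g = (s.filter p).map (fun _ => w) :=
    Multiset.map_congr rfl (fun v hv => hw v (Multiset.mem_filter.mp hv).1 (Multiset.mem_filter.mp hv).2)
  rw [he, Multiset.map_const', hc]

lemma aux_mcard_filter_univ {V : Type*} [Fintype V] [DecidableEq V]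
    (p : V → Prop) [DecidablePred p] :
    Multiset.card (Multiset.filter p (Finset.univ : Finset V).val)
      = ((Finset.univ : Finset V).filter p).card := rfl

lemma aux_arith_sq1 (Q : ℕ) (h : 2 ≤ Q) : (Q-1)*(Q-1) = Q*Q - 2*Q + 1 := by
  obtain ⟨c, rfl⟩ : ∃ c, Q = c + 2 := ⟨Q - 2, by omega⟩
  have e1 : (c+2)*(c+2) + 1 = (c+1)*(c+1) + 2*(c+2) := by ring
  have e0 : c + 2 - 1 = c + 1 := by omega
  rw [e0]
  have e2 : 1*1 ≤ (c+1)*(c+1) := Nat.mul_le_mul (by omega) (by omega)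
  omega

lemma aux_arith_sq (X Q : ℕ) (h : Q ≤ X) : (X - Q) * (X - Q) = X*X + Q*Q - 2*(X*Q) := by
  obtain ⟨d, rfl⟩ : ∃ d, X = Q + d := ⟨X - Q, by omega⟩
  have e0 : Q + d - Q = d := by omega
  rw [e0]
  have e1 : (Q+d)*(Q+d) + Q*Q = d*d + 2*((Q+d)*Q) := by ring
  omega

lemma aux_arith_mixed (X Q : ℕ) (hQ1 : 1 ≤ Q) (hQX : Q ≤ X) :
    (X - Q) * (Q - 1) + (Q - 1) * (X - Q) = 2*(X*Q) + 2*Q - 2*(Q*Q) - 2*X := by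
  obtain ⟨d, rfl⟩ : ∃ d, X = Q + d := ⟨X - Q, by omega⟩
  obtain ⟨c, rfl⟩ : ∃ c, Q = c + 1 := ⟨Q - 1, by omega⟩
  have e0 : c + 1 + d - (c + 1) = d := by omega
  have e0' : c + 1 - 1 = c := by omega
  rw [e0, e0']
  have e1 : 2*((c+1+d)*(c+1)) = 2*((c+1)*(c+1)) + 2*(d*c) + 2*d := by ring
  have e2 : d*c + c*d = 2*(d*c) := by ring
  omega

theorem stmt_3 {m : ℕ} (hm : 1 ≤ m) (M N : Finset (Fin m))
    (hM : M ≠ ∅) (hMu : M ≠ Finset.univ) (hNu : N ≠ Finset.univ)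
    (Ds : Finset ((Fin m → ZMod 2) × (Fin m → ZMod 2)))
    (hDs : Ds = (deltaC M)ᶜ ×ˢ (deltaC N)ᶜ) :
    Ds.card = (2 ^ m - 2 ^ M.card) * (2 ^ m - 2 ^ N.card) ∧
    ((Finset.univ : Finset ((Fin m → ZMod 2) × (Fin m → ZMod 2))).image (cwL Ds)).card = 2 ^ (2 * m) ∧
    (Finset.univ : Finset ((Fin m → ZMod 2) × (Fin m → ZMod 2))).val.map (fun v => hammingNorm (gcwL Ds v)) =
      Multiset.replicate (2 ^ (2 * m - 2 * M.card) - 2 ^ (m - M.card + 1) + 1)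
          (2 ^ m * (2 ^ m - 2 ^ N.card)) +
      Multiset.replicate (2 ^ (m - M.card + 1) - 2)
          (2 ^ (m - 1) * (2 ^ m - 2 ^ N.card)) +
      Multiset.replicate (2 ^ (2 * m) + 2 ^ (2 * m - 2 * M.card) - 2 ^ (2 * m - M.card + 1))
          ((2 ^ m - 2 ^ M.card) * (2 ^ m - 2 ^ N.card)) +
      Multiset.replicate (2 ^ (2 * m - M.card + 1) + 2 ^ (m - M.card + 1) - 2 ^ (2 * m - 2 * M.card + 1) - 2 ^ (m + 1))
          ((2 ^ m - 2 ^ (M.card - 1)) * (2 ^ m - 2 ^ N.card)) +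
      Multiset.replicate (2 ^ (m + 1) - 2 ^ (m - M.card + 1))
          ((2 ^ (m - 1) - 2 ^ (M.card - 1)) * (2 ^ m - 2 ^ N.card)) +
      Multiset.replicate (1)
          (0) := by
  -- basic cardinality facts
  have hk1 : 1 ≤ M.card := Finset.card_pos.mpr (Finset.nonempty_of_ne_empty hM)
  have hkm : M.card < m := by
    have h1 : M ⊂ Finset.univ := Finset.ssubset_univ_iff.mpr hMu
    have h2 := Finset.card_lt_card h1
    simpa using h2
  have hNm : N.card < m := by
    have h1 : N ⊂ Finset.univ := Finset.ssubset_univ_iff.mpr hNu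
    have h2 := Finset.card_lt_card h1
    simpa using h2
  have hA : ((deltaC M)ᶜ).card = 2 ^ m - 2 ^ M.card := by
    rw [Finset.card_compl, aux_card_deltaC, aux_card_fn]
  have hB : ((deltaC N)ᶜ).card = 2 ^ m - 2 ^ N.card := by
    rw [Finset.card_compl, aux_card_deltaC, aux_card_fn]
  -- power facts
  have hq2 : 2 ≤ 2 ^ (m - M.card) := by
    have := Nat.pow_le_pow_right (show 0 < 2 by norm_num) (show 1 ≤ m - M.card by omega)
    simpa using this
  have hQX : 2 ^ (m - M.card) ≤ 2 ^ m := Nat.pow_le_pow_right (by norm_num) (by omega)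
  have hXN : 2 ^ N.card < 2 ^ m := Nat.pow_lt_pow_right (by norm_num) hNm
  have hXM : 2 ^ M.card < 2 ^ m := Nat.pow_lt_pow_right (by norm_num) hkm
  have hP2 : 2 ^ m = 2 * 2 ^ (m - 1) := by
    have h := pow_succ' 2 (m - 1)
    have h2 : m - 1 + 1 = m := by omega
    rw [h2] at h
    exact h
  have hK2 : 2 ^ M.card = 2 * 2 ^ (M.card - 1) := by
    have h := pow_succ' 2 (M.card - 1)
    have h2 : M.card - 1 + 1 = M.card := by omega
    rw [h2] at h
    exact h
  have hKleP : 2 ^ (M.card - 1) ≤ 2 ^ (m - 1) := Nat.pow_le_pow_right (by norm_num) (by omega)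
  have hKltP : 2 ^ (M.card - 1) < 2 ^ (m - 1) := Nat.pow_lt_pow_right (by norm_num) (by omega)
  have p1 : 2 ^ (2 * m) = 2 ^ m * 2 ^ m := by
    rw [← pow_add]; congr 1; omega
  have p2 : 2 ^ (2 * m - 2 * M.card) = 2 ^ (m - M.card) * 2 ^ (m - M.card) := by
    rw [← pow_add]; congr 1; omega
  have p3 : 2 ^ (2 * m - M.card + 1) = 2 * (2 ^ m * 2 ^ (m - M.card)) := by
    rw [← pow_add, ← pow_succ']; congr 1; omega
  have p4 : 2 ^ (m - M.card + 1) = 2 * 2 ^ (m - M.card) := by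
    rw [← pow_succ']
  have p5 : 2 ^ (m + 1) = 2 * 2 ^ m := by
    rw [← pow_succ']
  have p6 : 2 ^ (2 * m - 2 * M.card + 1) = 2 * (2 ^ (m - M.card) * 2 ^ (m - M.card)) := by
    rw [← pow_add, ← pow_succ']; congr 1; omega
  -- value of F1 on the complement of deltaC M
  have hF : ∀ γ : Fin m → ZMod 2, F1 (deltaC M)ᶜ γ = ftv m M.card (typ M γ) := by
    intro γ
    have hsum := aux_F1_add_compl (deltaC M) γ
    rcases aux_typ_cases M γ with h | h | h
    · have h0 := (aux_typ_zero_iff M γ).mp h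
      rw [h, h0]
      have e1 := aux_F1_zero ((deltaC M)ᶜ)
      rw [e1]
      simp [ftv]
    · obtain ⟨hne, hdisj⟩ := (aux_typ_one_iff M γ).mp h
      have hu := aux_F1_univ γ hne
      have hd := aux_F1_deltaC_disj M γ hdisj
      rw [h]
      have hval : ftv m M.card 1 = 2 ^ (m - 1) := by simp [ftv]
      rw [hval]
      omega
    · have hnall := (aux_typ_two_iff M γ).mp h
      push_neg at hnall
      obtain ⟨i, hiM, hiz⟩ := hnall
      have hne : γ ≠ 0 := fun hc => hiz (by rw [hc]; rfl)
      have hu := aux_F1_univ γ hne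
      have hd := aux_F1_deltaC M γ i hiM hiz
      rw [h]
      have hval : ftv m M.card 2 = 2 ^ (m - 1) - 2 ^ (M.card - 1) := by simp [ftv]
      rw [hval]
      omega
  -- parts
  refine ⟨?_, ?_, ?_⟩
  · rw [hDs, Finset.card_product, hA, hB]
  · -- injectivity of cwL
    have hFpos : ∀ γ : Fin m → ZMod 2, γ ≠ 0 → 0 < F1 (deltaC M)ᶜ γ := by
      intro γ hγ
      rw [hF]
      rcases aux_typ_cases M γ with h | h | h
      · exact absurd ((aux_typ_zero_iff M γ).mp h) hγ
      · rw [h]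
        have hval : ftv m M.card 1 = 2 ^ (m - 1) := by simp [ftv]
        rw [hval]
        positivity
      · rw [h]
        have hval : ftv m M.card 2 = 2 ^ (m - 1) - 2 ^ (M.card - 1) := by simp [ftv]
        rw [hval]
        omega
    have hkey : ∀ α α' : Fin m → ZMod 2,
        (∀ t ∈ (deltaC M)ᶜ, dotp α t = dotp α' t) → α = α' := by
      intro α α' hall
      by_contra hne
      have hγ : α + α' ≠ 0 := by
        intro hc
        apply hne
        funext i
        have h0 := congrFun hc i
        have : α i + α' i = 0 := h0
        exact (by decide : ∀ a b : ZMod 2, a + b = 0 → a = b) _ _ this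
      have hpos := hFpos _ hγ
      unfold F1 at hpos
      obtain ⟨t, htmem⟩ := Finset.card_pos.mp hpos
      rw [Finset.mem_filter] at htmem
      have h1 := hall t htmem.1
      have h2 := htmem.2
      rw [aux_dotp_add_left, h1] at h2
      have h3 : dotp α' t + dotp α' t = 0 :=
        (by decide : ∀ a : ZMod 2, a + a = 0) _
      rw [h3] at h2
      exact absurd h2 (by decide)
    have hBne : ((deltaC N)ᶜ).Nonempty := by
      apply Finset.card_pos.mp
      rw [hB]
      omega
    obtain ⟨t₂, ht₂⟩ := hBne
    have hinj : Function.Injective (cwL Ds) := by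
      intro u v h
      have hcomp : ∀ t ∈ (deltaC M)ᶜ,
          dotp u.1 t = dotp v.1 t ∧ dotp u.2 t = dotp v.2 t := by
        intro t ht
        have hd : (t, t₂) ∈ Ds := by
          rw [hDs]; exact Finset.mem_product.mpr ⟨ht, ht₂⟩
        have hcw := congrFun h ⟨(t, t₂), hd⟩
        exact ⟨congrArg Prod.fst hcw, congrArg Prod.snd hcw⟩
      exact Prod.ext (hkey _ _ fun t ht => (hcomp t ht).1) (hkey _ _ fun t ht => (hcomp t ht).2)
    rw [Finset.card_image_of_injective _ hinj, Finset.card_univ, Fintype.card_prod,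
      aux_card_fn, ← pow_add]
    congr 1
    omega
  · -- the weight enumerator
    -- class cardinalities
    have hdis : ∀ (P Q : (Fin m → ZMod 2) × (Fin m → ZMod 2) → Prop)
        [DecidablePred P] [DecidablePred Q],
        (∀ v, ¬ (P v ∧ Q v)) →
        Disjoint (Finset.univ.filter P) (Finset.univ.filter Q) := by
      intro P Q _ _ hPQ
      rw [Finset.disjoint_left]
      intro v h1 h2
      rw [Finset.mem_filter] at h1 h2
      exact hPQ v ⟨h1.2, h2.2⟩
    have hC0 : (Finset.univ.filter (fun v : (Fin m → ZMod 2) × (Fin m → ZMod 2) =>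
        cls M v = 0)).card = 1 := by
      rw [Finset.filter_congr (fun v _ => aux_cls_eq_zero_iff M v), aux_count_pair,
        aux_cnt0]
    have hC4 : (Finset.univ.filter (fun v : (Fin m → ZMod 2) × (Fin m → ZMod 2) =>
        cls M v = 4)).card = 2 ^ (2 * m - 2 * M.card) - 2 ^ (m - M.card + 1) + 1 := by
      rw [Finset.filter_congr (fun v _ => aux_cls_eq_four_iff M v), aux_count_pair,
        aux_cnt1, aux_arith_sq1 _ hq2, ← p2, ← p4]
    have hC1 : (Finset.univ.filter (fun v : (Fin m → ZMod 2) × (Fin m → ZMod 2) =>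
        cls M v = 1)).card = 2 ^ (m - M.card + 1) - 2 := by
      rw [Finset.filter_congr (fun v _ => aux_cls_eq_one_iff M v), Finset.filter_or,
        Finset.card_union_of_disjoint (hdis _ _ (by intro v hv; omega)),
        aux_count_pair, aux_count_pair, aux_cnt0, aux_cnt1]
      omega
    have hC2 : (Finset.univ.filter (fun v : (Fin m → ZMod 2) × (Fin m → ZMod 2) =>
        cls M v = 2)).card = 2 ^ (m + 1) - 2 ^ (m - M.card + 1) := by
      rw [Finset.filter_congr (fun v _ => aux_cls_eq_two_iff M v), Finset.filter_or,
        Finset.card_union_of_disjoint (hdis _ _ (by intro v hv; omega)),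
        aux_count_pair, aux_count_pair, aux_cnt0, aux_cnt2]
      omega
    have hC12 : (Finset.univ.filter (fun v : (Fin m → ZMod 2) × (Fin m → ZMod 2) =>
        cls M v = 12)).card
        = 2 ^ (2 * m) + 2 ^ (2 * m - 2 * M.card) - 2 ^ (2 * m - M.card + 1) := by
      rw [Finset.filter_congr (fun v _ => aux_cls_eq_twelve_iff M v), aux_count_pair,
        aux_cnt2, aux_arith_sq _ _ hQX, ← p1, ← p2, ← p3]
    have hC7 : (Finset.univ.filter (fun v : (Fin m → ZMod 2) × (Fin m → ZMod 2) =>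
        cls M v = 7)).card
        = 2 ^ (2 * m - M.card + 1) + 2 ^ (m - M.card + 1)
          - 2 ^ (2 * m - 2 * M.card + 1) - 2 ^ (m + 1) := by
      rw [Finset.filter_congr (fun v _ => aux_cls_eq_seven_iff M v), Finset.filter_or,
        Finset.card_union_of_disjoint (hdis _ _ (by intro v hv; omega)),
        aux_count_pair, aux_count_pair, aux_cnt1, aux_cnt2]
      have := aux_arith_mixed (2 ^ m) (2 ^ (m - M.card)) (by omega) hQX
      omega
    -- weights per class
    have hwv : ∀ v : (Fin m → ZMod 2) × (Fin m → ZMod 2),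
        hammingNorm (gcwL Ds v)
        = ((deltaC N)ᶜ).card * (ftv m M.card (typ M v.2) + ftv m M.card (typ M (v.1 + v.2))) := by
      intro v
      rw [aux_weight_formula _ _ Ds hDs v, hF v.2, hF (v.1 + v.2)]
    have ftv0 : ftv m M.card 0 = 0 := by simp [ftv]
    have ftv1 : ftv m M.card 1 = 2 ^ (m - 1) := by simp [ftv]
    have ftv2 : ftv m M.card 2 = 2 ^ (m - 1) - 2 ^ (M.card - 1) := by simp [ftv]
    have hw4 : ∀ v, cls M v = 4 →
        hammingNorm (gcwL Ds v) = 2 ^ m * (2 ^ m - 2 ^ N.card) := by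
      intro v hv
      obtain ⟨h1, h2⟩ := (aux_cls_eq_four_iff M v).mp hv
      rw [hwv v, h1, h2, ftv1, hB, mul_comm]
      congr 1
      omega
    have hw1 : ∀ v, cls M v = 1 →
        hammingNorm (gcwL Ds v) = 2 ^ (m - 1) * (2 ^ m - 2 ^ N.card) := by
      intro v hv
      rcases (aux_cls_eq_one_iff M v).mp hv with ⟨h1, h2⟩ | ⟨h1, h2⟩ <;>
        rw [hwv v, h1, h2, ftv0, ftv1, hB, mul_comm] <;> congr 1 <;> omega
    have hw12 : ∀ v, cls M v = 12 →
        hammingNorm (gcwL Ds v) = (2 ^ m - 2 ^ M.card) * (2 ^ m - 2 ^ N.card) := by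
      intro v hv
      obtain ⟨h1, h2⟩ := (aux_cls_eq_twelve_iff M v).mp hv
      rw [hwv v, h1, h2, ftv2, hB, mul_comm]
      congr 1
      omega
    have hw7 : ∀ v, cls M v = 7 →
        hammingNorm (gcwL Ds v) = (2 ^ m - 2 ^ (M.card - 1)) * (2 ^ m - 2 ^ N.card) := by
      intro v hv
      rcases (aux_cls_eq_seven_iff M v).mp hv with ⟨h1, h2⟩ | ⟨h1, h2⟩ <;>
        rw [hwv v, h1, h2, ftv1, ftv2, hB, mul_comm] <;> congr 1 <;> omega
    have hw2 : ∀ v, cls M v = 2 →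
        hammingNorm (gcwL Ds v) = (2 ^ (m - 1) - 2 ^ (M.card - 1)) * (2 ^ m - 2 ^ N.card) := by
      intro v hv
      rcases (aux_cls_eq_two_iff M v).mp hv with ⟨h1, h2⟩ | ⟨h1, h2⟩ <;>
        rw [hwv v, h1, h2, ftv0, ftv2, hB, mul_comm] <;> congr 1 <;> omega
    have hw0 : ∀ v, cls M v = 0 → hammingNorm (gcwL Ds v) = 0 := by
      intro v hv
      obtain ⟨h1, h2⟩ := (aux_cls_eq_zero_iff M v).mp hv
      rw [hwv v, h1, h2, ftv0]
      simp
    -- peel off the classes one by one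
    have step4 := aux_peel (Finset.univ : Finset ((Fin m → ZMod 2) × (Fin m → ZMod 2))).val
      (fun v => cls M v = 4) (fun v => hammingNorm (gcwL Ds v))
      (2 ^ m * (2 ^ m - 2 ^ N.card))
      (2 ^ (2 * m - 2 * M.card) - 2 ^ (m - M.card + 1) + 1)
      (fun v _ h => hw4 v h)
      (by rw [aux_mcard_filter_univ, hC4])
    have hflat1 : Multiset.filter (fun v => cls M v = 1)
        (Multiset.filter (fun v => ¬ cls M v = 4)
          (Finset.univ : Finset ((Fin m → ZMod 2) × (Fin m → ZMod 2))).val)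
        = Multiset.filter (fun v => cls M v = 1)
          (Finset.univ : Finset ((Fin m → ZMod 2) × (Fin m → ZMod 2))).val := by
      rw [Multiset.filter_filter]
      exact Multiset.filter_congr (fun v _ => by omega)
    have step1 := aux_peel
      (Multiset.filter (fun v => ¬ cls M v = 4)
        (Finset.univ : Finset ((Fin m → ZMod 2) × (Fin m → ZMod 2))).val)
      (fun v => cls M v = 1) (fun v => hammingNorm (gcwL Ds v))
      (2 ^ (m - 1) * (2 ^ m - 2 ^ N.card))
      (2 ^ (m - M.card + 1) - 2)
      (fun v _ h => hw1 v h)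
      (by rw [hflat1, aux_mcard_filter_univ, hC1])
    have hflat12 : Multiset.filter (fun v => cls M v = 12)
        (Multiset.filter (fun v => ¬ cls M v = 1)
          (Multiset.filter (fun v => ¬ cls M v = 4)
            (Finset.univ : Finset ((Fin m → ZMod 2) × (Fin m → ZMod 2))).val))
        = Multiset.filter (fun v => cls M v = 12)
          (Finset.univ : Finset ((Fin m → ZMod 2) × (Fin m → ZMod 2))).val := by
      simp only [Multiset.filter_filter]
      exact Multiset.filter_congr (fun v _ => by omega)
    have step12 := aux_peel
      (Multiset.filter (fun v => ¬ cls M v = 1)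
        (Multiset.filter (fun v => ¬ cls M v = 4)
          (Finset.univ : Finset ((Fin m → ZMod 2) × (Fin m → ZMod 2))).val))
      (fun v => cls M v = 12) (fun v => hammingNorm (gcwL Ds v))
      ((2 ^ m - 2 ^ M.card) * (2 ^ m - 2 ^ N.card))
      (2 ^ (2 * m) + 2 ^ (2 * m - 2 * M.card) - 2 ^ (2 * m - M.card + 1))
      (fun v _ h => hw12 v h)
      (by rw [hflat12, aux_mcard_filter_univ, hC12])
    have hflat7 : Multiset.filter (fun v => cls M v = 7)
        (Multiset.filter (fun v => ¬ cls M v = 12)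
          (Multiset.filter (fun v => ¬ cls M v = 1)
            (Multiset.filter (fun v => ¬ cls M v = 4)
              (Finset.univ : Finset ((Fin m → ZMod 2) × (Fin m → ZMod 2))).val)))
        = Multiset.filter (fun v => cls M v = 7)
          (Finset.univ : Finset ((Fin m → ZMod 2) × (Fin m → ZMod 2))).val := by
      simp only [Multiset.filter_filter]
      exact Multiset.filter_congr (fun v _ => by omega)
    have step7 := aux_peel
      (Multiset.filter (fun v => ¬ cls M v = 12)
        (Multiset.filter (fun v => ¬ cls M v = 1)
          (Multiset.filter (fun v => ¬ cls M v = 4)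
            (Finset.univ : Finset ((Fin m → ZMod 2) × (Fin m → ZMod 2))).val)))
      (fun v => cls M v = 7) (fun v => hammingNorm (gcwL Ds v))
      ((2 ^ m - 2 ^ (M.card - 1)) * (2 ^ m - 2 ^ N.card))
      (2 ^ (2 * m - M.card + 1) + 2 ^ (m - M.card + 1)
        - 2 ^ (2 * m - 2 * M.card + 1) - 2 ^ (m + 1))
      (fun v _ h => hw7 v h)
      (by rw [hflat7, aux_mcard_filter_univ, hC7])
    have hflat2 : Multiset.filter (fun v => cls M v = 2)
        (Multiset.filter (fun v => ¬ cls M v = 7)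
          (Multiset.filter (fun v => ¬ cls M v = 12)
            (Multiset.filter (fun v => ¬ cls M v = 1)
              (Multiset.filter (fun v => ¬ cls M v = 4)
                (Finset.univ : Finset ((Fin m → ZMod 2) × (Fin m → ZMod 2))).val))))
        = Multiset.filter (fun v => cls M v = 2)
          (Finset.univ : Finset ((Fin m → ZMod 2) × (Fin m → ZMod 2))).val := by
      simp only [Multiset.filter_filter]
      exact Multiset.filter_congr (fun v _ => by omega)
    have step2 := aux_peel
      (Multiset.filter (fun v => ¬ cls M v = 7)
        (Multiset.filter (fun v => ¬ cls M v = 12)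
          (Multiset.filter (fun v => ¬ cls M v = 1)
            (Multiset.filter (fun v => ¬ cls M v = 4)
              (Finset.univ : Finset ((Fin m → ZMod 2) × (Fin m → ZMod 2))).val))))
      (fun v => cls M v = 2) (fun v => hammingNorm (gcwL Ds v))
      ((2 ^ (m - 1) - 2 ^ (M.card - 1)) * (2 ^ m - 2 ^ N.card))
      (2 ^ (m + 1) - 2 ^ (m - M.card + 1))
      (fun v _ h => hw2 v h)
      (by rw [hflat2, aux_mcard_filter_univ, hC2])
    have hrem : (Multiset.filter (fun v => ¬ cls M v = 2)
        (Multiset.filter (fun v => ¬ cls M v = 7)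
          (Multiset.filter (fun v => ¬ cls M v = 12)
            (Multiset.filter (fun v => ¬ cls M v = 1)
              (Multiset.filter (fun v => ¬ cls M v = 4)
                (Finset.univ : Finset ((Fin m → ZMod 2) × (Fin m → ZMod 2))).val))))).map
        (fun v => hammingNorm (gcwL Ds v)) = Multiset.replicate 1 0 := by
      have hflat0 : Multiset.filter (fun v => ¬ cls M v = 2)
          (Multiset.filter (fun v => ¬ cls M v = 7)
            (Multiset.filter (fun v => ¬ cls M v = 12)
              (Multiset.filter (fun v => ¬ cls M v = 1)
                (Multiset.filter (fun v => ¬ cls M v = 4)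
                  (Finset.univ : Finset ((Fin m → ZMod 2) × (Fin m → ZMod 2))).val))))
          = Multiset.filter (fun v => cls M v = 0)
            (Finset.univ : Finset ((Fin m → ZMod 2) × (Fin m → ZMod 2))).val := by
        simp only [Multiset.filter_filter]
        exact Multiset.filter_congr (fun v _ => by have := aux_cls_values M v; omega)
      rw [hflat0]
      have hmapc : (Multiset.filter (fun v => cls M v = 0)
          (Finset.univ : Finset ((Fin m → ZMod 2) × (Fin m → ZMod 2))).val).map
          (fun v => hammingNorm (gcwL Ds v))
          = (Multiset.filter (fun v => cls M v = 0)
            (Finset.univ : Finset ((Fin m → ZMod 2) × (Fin m → ZMod 2))).val).map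
            (fun _ => 0) :=
        Multiset.map_congr rfl (fun v hv => hw0 v (Multiset.mem_filter.mp hv).2)
      rw [hmapc, Multiset.map_const', aux_mcard_filter_univ, hC0]
    rw [step4, step1, step12, step7, step2, hrem]
    simp only [add_assoc]
end
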